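/- Let π be chosen uniformly at random from T(D,D'), the set of permutations taking deck D to deck D'. Suppose D(1) = u and D(2) = v with u ≠ v, and let n_u, n_v be the numbers of cards with values u and v respectively. Then E[ω_1(π)] = Z(D',u,v)/(n_u·n_v), where ω_1(π) = 1 if π(1) < π(2) and ω_1(π) = -1 if π(1) > π(2). -/

import Mathlib

open scoped Classical

/-- `W D u v`: number of u-v digraphs minus number of v-u digraphs in deck `D`. -/
noncomputable def Wdig {n : ℕ} {V : Type*} (D : Fin n → V) (u v : V) : ℤ :=
  ((Finset.univ.filter
      (fun i : Fin n => ∃ h : i.1 + 1 < n, D i = u ∧ D ⟨i.1 + 1, h⟩ = v)).card : ℤ) -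
  ((Finset.univ.filter
      (fun i : Fin n => ∃ h : i.1 + 1 < n, D i = v ∧ D ⟨i.1 + 1, h⟩ = u)).card : ℤ)

/-- `Z D u v`: number of u-v pairs minus number of v-u pairs in deck `D`. -/
noncomputable def Zpair {n : ℕ} {V : Type*} (D : Fin n → V) (u v : V) : ℤ :=
  ((Finset.univ.filter
      (fun p : Fin n × Fin n => p.1 < p.2 ∧ D p.1 = u ∧ D p.2 = v)).card : ℤ) -
  ((Finset.univ.filter
      (fun p : Fin n × Fin n => p.1 < p.2 ∧ D p.1 = v ∧ D p.2 = u)).card : ℤ)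

lemma swap_pres {n : ℕ} {V : Type*} (D' : Fin n → V) {x y : Fin n}
    (h : D' x = D' y) (z : Fin n) : D' (Equiv.swap x y z) = D' z := by
  rw [Equiv.swap_apply_def]
  split_ifs with h1 h2 <;> simp_all

lemma fiber_const {n : ℕ} {V : Type*} (D D' : Fin n → V) (i0 i1 : Fin n)
    {u v : V} (huv : u ≠ v) {a b a' b' : Fin n}
    (ha : D' a = u) (hb : D' b = v) (ha' : D' a' = u) (hb' : D' b' = v) :
    (Finset.univ.filter (fun π : Equiv.Perm (Fin n) =>
        (∀ i, D' (π i) = D i) ∧ π i0 = a ∧ π i1 = b)).card =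
    (Finset.univ.filter (fun π : Equiv.Perm (Fin n) =>
        (∀ i, D' (π i) = D i) ∧ π i0 = a' ∧ π i1 = b')).card := by
  have hab : a ≠ b := fun h => huv (by rw [← ha, h, hb])
  have hab' : a ≠ b' := fun h => huv (by rw [← ha, h, hb'])
  have ha'b : a' ≠ b := fun h => huv (by rw [← ha', h, hb])
  have ha'b' : a' ≠ b' := fun h => huv (by rw [← ha', h, hb'])
  apply Finset.card_bij' (fun π _ => Equiv.swap a a' * (Equiv.swap b b' * π))
    (fun π _ => Equiv.swap b b' * (Equiv.swap a a' * π))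
  · intro π hπ
    simp only [Finset.mem_filter, Finset.mem_univ, true_and] at hπ ⊢
    obtain ⟨hD, h0, h1⟩ := hπ
    refine ⟨fun i => ?_, ?_, ?_⟩
    · simp only [Equiv.Perm.mul_apply]
      rw [swap_pres D' (ha.trans ha'.symm), swap_pres D' (hb.trans hb'.symm), hD]
    · simp only [Equiv.Perm.mul_apply, h0,
        Equiv.swap_apply_of_ne_of_ne hab hab', Equiv.swap_apply_left]
    · simp only [Equiv.Perm.mul_apply, h1, Equiv.swap_apply_left,
        Equiv.swap_apply_of_ne_of_ne hab'.symm ha'b'.symm]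
  · intro π hπ
    simp only [Finset.mem_filter, Finset.mem_univ, true_and] at hπ ⊢
    obtain ⟨hD, h0, h1⟩ := hπ
    refine ⟨fun i => ?_, ?_, ?_⟩
    · simp only [Equiv.Perm.mul_apply]
      rw [swap_pres D' (hb.trans hb'.symm), swap_pres D' (ha.trans ha'.symm), hD]
    · simp only [Equiv.Perm.mul_apply, h0, Equiv.swap_apply_right,
        Equiv.swap_apply_of_ne_of_ne hab hab']
    · simp only [Equiv.Perm.mul_apply, h1,
        Equiv.swap_apply_of_ne_of_ne hab'.symm ha'b'.symm, Equiv.swap_apply_right]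
  · intro π _
    simp [Equiv.swap_mul_self_mul, ← mul_assoc, Equiv.swap_mul_self]
  · intro π _
    simp [Equiv.swap_mul_self_mul, ← mul_assoc, Equiv.swap_mul_self]

set_option maxHeartbeats 1000000 in
lemma main_aux {n : ℕ} {V : Type*} (D D' : Fin n → V) (σ : Equiv.Perm (Fin n))
    (hσ : ∀ i, D' (σ i) = D i) (u v : V) (i0 i1 : Fin n)
    (hu : D i0 = u) (hv : D i1 = v) (huv : u ≠ v) :
    (((Finset.univ.filter (fun π : Equiv.Perm (Fin n) =>
          (∀ i, D' (π i) = D i) ∧ π i0 < π i1)).card : ℚ) -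
      ((Finset.univ.filter (fun π : Equiv.Perm (Fin n) =>
          (∀ i, D' (π i) = D i) ∧ π i1 < π i0)).card : ℚ)) /
      ((Finset.univ.filter (fun π : Equiv.Perm (Fin n) =>
          ∀ i, D' (π i) = D i)).card : ℚ) =
    (Zpair D' u v : ℚ) /
      (((Finset.univ.filter (fun i : Fin n => D' i = u)).card : ℚ) *
        ((Finset.univ.filter (fun i : Fin n => D' i = v)).card : ℚ)) := by
  classical
  set A : Finset (Fin n) := Finset.univ.filter (fun i => D' i = u) with hA
  set B : Finset (Fin n) := Finset.univ.filter (fun i => D' i = v) with hB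
  set T : Finset (Equiv.Perm (Fin n)) :=
    Finset.univ.filter (fun π => ∀ i, D' (π i) = D i) with hTdef
  set f : Equiv.Perm (Fin n) → Fin n × Fin n := fun π => (π i0, π i1) with hf
  have hmem : ∀ π ∈ T, f π ∈ A ×ˢ B := by
    intro π hπ
    simp only [hTdef, Finset.mem_filter, Finset.mem_univ, true_and] at hπ
    simp only [hA, hB, hf, Finset.mem_product, Finset.mem_filter, Finset.mem_univ, true_and]
    exact ⟨(hπ i0).trans hu, (hπ i1).trans hv⟩
  set c : ℕ := (T.filter (fun π => f π = (σ i0, σ i1))).card with hc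
  have hfib : ∀ p ∈ A ×ˢ B, (T.filter (fun π => f π = p)).card = c := by
    rintro ⟨a, b⟩ hp
    simp only [hA, hB, Finset.mem_product, Finset.mem_filter, Finset.mem_univ, true_and] at hp
    have key := fiber_const D D' i0 i1 huv hp.1 hp.2
      ((hσ i0).trans hu) ((hσ i1).trans hv)
    have eq1 : ∀ (a b : Fin n), T.filter (fun π => f π = (a, b)) =
        Finset.univ.filter (fun π : Equiv.Perm (Fin n) =>
          (∀ i, D' (π i) = D i) ∧ π i0 = a ∧ π i1 = b) := by
      intro a b
      ext π
      simp [hTdef, hf, Finset.mem_filter, Prod.ext_iff, and_assoc]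
    rw [hc, eq1, eq1]
    exact key
  -- fibers for the restricted sets
  have hfibP : ∀ (R : Fin n → Fin n → Prop) [DecidableRel R], ∀ p ∈ A ×ˢ B,
      ((T.filter (fun π => R (π i0) (π i1))).filter (fun π => f π = p)).card =
        if R p.1 p.2 then c else 0 := by
    intro R _ p hp
    have hset : (T.filter (fun π => R (π i0) (π i1))).filter (fun π => f π = p) =
        (T.filter (fun π => f π = p)).filter (fun π => R (π i0) (π i1)) := by
      simp [Finset.filter_filter, and_comm]
    rw [hset]
    by_cases hR : R p.1 p.2
    · rw [if_pos hR, Finset.filter_true_of_mem, hfib p hp]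
      intro π hπ
      simp only [Finset.mem_filter, hf, Prod.ext_iff] at hπ
      rw [hπ.2.1, hπ.2.2]; exact hR
    · rw [if_neg hR, Finset.card_eq_zero.mpr]
      rw [Finset.filter_false_of_mem]
      intro π hπ
      simp only [Finset.mem_filter, hf, Prod.ext_iff] at hπ
      rw [hπ.2.1, hπ.2.2]; exact hR
  have hcardR : ∀ (R : Fin n → Fin n → Prop) [DecidableRel R],
      (T.filter (fun π => R (π i0) (π i1))).card =
        ((A ×ˢ B).filter (fun p => R p.1 p.2)).card * c := by
    intro R _
    rw [Finset.card_eq_sum_card_fiberwise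
      (fun π hπ => hmem π (Finset.filter_subset _ _ hπ)) (f := f)]
    rw [Finset.sum_congr rfl (hfibP R), ← Finset.sum_filter, Finset.sum_const, smul_eq_mul]
  have hTcard : T.card = (A.card * B.card) * c := by
    rw [Finset.card_eq_sum_card_fiberwise hmem, Finset.sum_congr rfl hfib,
      Finset.sum_const, smul_eq_mul, Finset.card_product]
  -- rewrite the two restricted filters in the goal as T.filter
  have e1 : Finset.univ.filter (fun π : Equiv.Perm (Fin n) =>
      (∀ i, D' (π i) = D i) ∧ π i0 < π i1) = T.filter (fun π => π i0 < π i1) := by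
    simp [hTdef, Finset.filter_filter]
  have e2 : Finset.univ.filter (fun π : Equiv.Perm (Fin n) =>
      (∀ i, D' (π i) = D i) ∧ π i1 < π i0) = T.filter (fun π => π i1 < π i0) := by
    simp [hTdef, Finset.filter_filter]
  have hZ1 : Finset.univ.filter
      (fun p : Fin n × Fin n => p.1 < p.2 ∧ D' p.1 = u ∧ D' p.2 = v) =
      (A ×ˢ B).filter (fun p => p.1 < p.2) := by
    ext p
    simp only [hA, hB, Finset.mem_filter, Finset.mem_univ, true_and, Finset.mem_product]
    tauto
  have hZ2 : (Finset.univ.filter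
      (fun p : Fin n × Fin n => p.1 < p.2 ∧ D' p.1 = v ∧ D' p.2 = u)).card =
      ((A ×ˢ B).filter (fun p => p.2 < p.1)).card := by
    apply Finset.card_nbij' Prod.swap Prod.swap
    · intro p hp
      simp only [Finset.mem_coe, Finset.mem_filter, Finset.mem_univ, true_and] at hp
      simp only [Finset.mem_coe, Finset.mem_filter, Finset.mem_product, hA, hB, Finset.mem_univ,
        true_and, Prod.fst_swap, Prod.snd_swap]
      tauto
    · intro p hp
      simp only [Finset.mem_coe, Finset.mem_filter, Finset.mem_product, hA, hB, Finset.mem_univ,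
        true_and] at hp
      simp only [Finset.mem_coe, Finset.mem_filter, Finset.mem_univ, true_and, Prod.fst_swap, Prod.snd_swap]
      tauto
    · intro p _; simp
    · intro p _; simp
  have hcpos : 0 < c := by
    rw [hc]
    apply Finset.card_pos.mpr
    exact ⟨σ, by simp [hTdef, hf, hσ]⟩
  have hApos : 0 < A.card :=
    Finset.card_pos.mpr ⟨σ i0, by simp [hA, (hσ i0).trans hu]⟩
  have hBpos : 0 < B.card :=
    Finset.card_pos.mpr ⟨σ i1, by simp [hB, (hσ i1).trans hv]⟩
  rw [e1, e2, hcardR (fun x y => x < y), hcardR (fun x y => y < x), Zpair, hZ1, hZ2, hTcard]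
  have hc0 : (c : ℚ) ≠ 0 := by positivity
  have hA0 : (A.card : ℚ) ≠ 0 := by positivity
  have hB0 : (B.card : ℚ) ≠ 0 := by positivity
  push_cast
  field_simp

/-- If `D(1) = u ≠ v = D(2)`, then for `π` uniform on `T(D,D')`,
`E[ω₁(π)] = Z(D',u,v)/(n_u·n_v)`. -/
theorem expectation_omega_ne (n : ℕ) (hn : 2 ≤ n) {V : Type*} (D D' : Fin n → V)
    (σ : Equiv.Perm (Fin n)) (hD' : D' = D ∘ ⇑σ.symm) (u v : V)
    (hu : D ⟨0, by omega⟩ = u) (hv : D ⟨1, by omega⟩ = v) (huv : u ≠ v) :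
    (((Finset.univ.filter (fun π : Equiv.Perm (Fin n) =>
          (∀ i, D' (π i) = D i) ∧ π ⟨0, by omega⟩ < π ⟨1, by omega⟩)).card : ℚ) -
      ((Finset.univ.filter (fun π : Equiv.Perm (Fin n) =>
          (∀ i, D' (π i) = D i) ∧ π ⟨1, by omega⟩ < π ⟨0, by omega⟩)).card : ℚ)) /
      ((Finset.univ.filter (fun π : Equiv.Perm (Fin n) =>
          ∀ i, D' (π i) = D i)).card : ℚ) =
    (Zpair D' u v : ℚ) /
      (((Finset.univ.filter (fun i : Fin n => D' i = u)).card : ℚ) *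
        ((Finset.univ.filter (fun i : Fin n => D' i = v)).card : ℚ)) := by
  have hσ : ∀ i, D' (σ i) = D i := by
    intro i; rw [hD']; simp
  exact main_aux D D' σ hσ u v _ _ hu hv huv
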